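/- Let s₁, s₂ ∈ ℤ with s₂ ≥ s₁, and let L₁, L₂ be the two rows of the symbol of a bipartition (λ¹, λ²) with respect to (s₁,s₂). Apply the matching procedure: x₁ = min L₁; y₁ = max{z ∈ L₂ : z ≤ x₁} if such z exists, else y₁ = max L₂; repeat on L₁ ∖ {x₁}, L₂ ∖ {y₁}. Then the resulting multiset Ỹ = {y₁, y₂, …} ⊆ L₂ consists of pairwise distinct integers, and the reordered sequences L̃₁ (from Ỹ) and L̃₂ (from (L₂ ∖ Ỹ) ∪ L₁) are strictly increasing sequences of integers with smallest entries s₂ − d and s₂ − d respectively for appropriate d, i.e. they form a valid symbol of some bipartition with charge (s₁,s₂). -/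
import Mathlib


/-- The row of the symbol of a partition `p` (0-indexed, `p i = λ_{i+1}`) with leftmost
entry based at `base` and of length `L`: entries `base + k + λ_{L−k}` for `k = 0,…,L−1`. -/
def symbolRow (p : ℕ → ℕ) (base : ℤ) (L : ℕ) : Finset ℤ :=
  (Finset.range L).image (fun k : ℕ => base + (k : ℤ) + ((p (L - 1 - k) : ℕ) : ℤ))

/-- The matching procedure: `x₁ = min X` is matched to `y₁ = max {z ∈ Y : z ≤ x₁}` if such
`z` exists, else `y₁ = max Y`; then repeat on `X ∖ {x₁}`, `Y ∖ {y₁}`. -/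
def matchSet (X Y : Finset ℤ) : Finset ℤ :=
  if hX : X.Nonempty then
    if hY : Y.Nonempty then
      let x := X.min' hX
      let y := if h : (Y.filter (fun z => z ≤ x)).Nonempty
        then (Y.filter (fun z => z ≤ x)).max' h
        else Y.max' hY
      insert y (matchSet (X.erase x) (Y.erase y))
    else ∅
  else ∅
termination_by X.card
decreasing_by exact Finset.card_erase_lt_of_mem (X.min'_mem hX)

lemma symbolRow_mem_ge (p : ℕ → ℕ) (base : ℤ) (L : ℕ) :
    ∀ z ∈ symbolRow p base L, base ≤ z := by
  intro z hz
  simp only [symbolRow, Finset.mem_image, Finset.mem_range] at hz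
  obtain ⟨k, _, rfl⟩ := hz
  have h1 : (0:ℤ) ≤ (k:ℤ) := Int.natCast_nonneg k
  have h2 : (0:ℤ) ≤ ((p (L-1-k) : ℕ) : ℤ) := Int.natCast_nonneg _
  linarith

lemma symbolRow_card (p : ℕ → ℕ) (hp : Antitone p) (base : ℤ) (L : ℕ) :
    (symbolRow p base L).card = L := by
  rw [symbolRow, Finset.card_image_of_injOn, Finset.card_range]
  have mono : ∀ k1 k2, k1 < k2 → k2 < L →
      base + (k1:ℤ) + (p (L-1-k1) : ℤ) < base + (k2:ℤ) + (p (L-1-k2) : ℤ) := by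
    intro k1 k2 h hL
    have hpk : p (L-1-k1) ≤ p (L-1-k2) := hp (by omega)
    omega
  intro k1 hk1 k2 hk2 he
  simp only [Finset.coe_range, Set.mem_Iio] at hk1 hk2
  by_contra hne
  rcases lt_or_gt_of_ne hne with h | h
  · exact absurd he (ne_of_lt (mono _ _ h hk2))
  · exact absurd he.symm (ne_of_lt (mono _ _ h hk1))

lemma matchSet_empty (Y : Finset ℤ) : matchSet ∅ Y = ∅ := by
  rw [matchSet]; simp

lemma matchSet_eq (X Y : Finset ℤ) (hX : X.Nonempty) (hY : Y.Nonempty) :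
    matchSet X Y =
      insert (if h : (Y.filter (fun z => z ≤ X.min' hX)).Nonempty
          then (Y.filter (fun z => z ≤ X.min' hX)).max' h
          else Y.max' hY)
        (matchSet (X.erase (X.min' hX)) (Y.erase
          (if h : (Y.filter (fun z => z ≤ X.min' hX)).Nonempty
            then (Y.filter (fun z => z ≤ X.min' hX)).max' h
            else Y.max' hY))) := by
  rw [matchSet]; simp [hX, hY]

lemma matchSet_main : ∀ n (X Y : Finset ℤ), X.card = n → X.card ≤ Y.card →
    matchSet X Y ⊆ Y ∧ (matchSet X Y).card = X.card ∧ X ∩ Y ⊆ matchSet X Y := by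
  intro n
  induction n with
  | zero =>
    intro X Y hc _
    have hXe : X = ∅ := Finset.card_eq_zero.mp hc
    subst hXe
    simp [matchSet_empty]
  | succ m ih =>
    intro X Y hc hcard
    have hX : X.Nonempty := Finset.card_pos.mp (by omega)
    have hY : Y.Nonempty := Finset.card_pos.mp (by omega)
    set x := X.min' hX with hxdef
    set y := if h : (Y.filter (fun z => z ≤ x)).Nonempty
        then (Y.filter (fun z => z ≤ x)).max' h
        else Y.max' hY with hydef
    have hyY : y ∈ Y := by
      rw [hydef]
      split
      · next h => exact Finset.mem_of_mem_filter _ ((Y.filter (fun z => z ≤ x)).max'_mem h)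
      · exact Y.max'_mem hY
    have heq : matchSet X Y = insert y (matchSet (X.erase x) (Y.erase y)) :=
      matchSet_eq X Y hX hY
    have hcX : (X.erase x).card = m := by
      rw [Finset.card_erase_of_mem (X.min'_mem hX)]; omega
    have hcY : (Y.erase y).card = Y.card - 1 := Finset.card_erase_of_mem hyY
    obtain ⟨ihsub, ihcard, ihinter⟩ := ih (X.erase x) (Y.erase y) hcX (by omega)
    have hMsub : matchSet (X.erase x) (Y.erase y) ⊆ Y.erase y := ihsub
    have hynot : y ∉ matchSet (X.erase x) (Y.erase y) := fun h =>
      (Finset.mem_erase.mp (hMsub h)).1 rfl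
    refine ⟨?_, ?_, ?_⟩
    · rw [heq]
      intro z hz
      rcases Finset.mem_insert.mp hz with rfl | hz
      · exact hyY
      · exact Finset.erase_subset _ _ (hMsub hz)
    · rw [heq, Finset.card_insert_of_notMem hynot, ihcard, hcX]; omega
    · intro z hz
      rw [heq]
      obtain ⟨hzX, hzY⟩ := Finset.mem_inter.mp hz
      by_cases hzy : z = y
      · rw [hzy]; exact Finset.mem_insert_self y _
      · have hzx : z ≠ x := by
          rintro rfl
          -- then the filter is nonempty and its max is z, so y = z
          have hzf : x ∈ Y.filter (fun w => w ≤ x) :=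
            Finset.mem_filter.mpr ⟨hzY, le_refl x⟩
          have hne : (Y.filter (fun w => w ≤ x)).Nonempty := ⟨x, hzf⟩
          have h1 : x ≤ (Y.filter (fun w => w ≤ x)).max' hne := Finset.le_max' _ _ hzf
          have h2 : (Y.filter (fun w => w ≤ x)).max' hne ≤ x :=
            (Finset.mem_filter.mp ((Y.filter (fun w => w ≤ x)).max'_mem hne)).2
          have : y = x := by rw [hydef, dif_pos hne]; omega
          exact hzy this.symm
        apply Finset.mem_insert_of_mem
        apply ihinter
        exact Finset.mem_inter.mpr ⟨Finset.mem_erase.mpr ⟨hzx, hzX⟩,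
          Finset.mem_erase.mpr ⟨hzy, hzY⟩⟩

lemma exists_antitone_row (base : ℤ) (S : Finset ℤ) (hS : ∀ z ∈ S, base ≤ z) :
    ∃ p' : ℕ → ℕ, Antitone p' ∧ symbolRow p' base S.card = S := by
  set L := S.card with hL
  let e := S.orderIsoOfFin hL.symm
  let a : ∀ k, k < L → ℤ := fun k hk => ((e ⟨k, hk⟩ : S) : ℤ)
  have ha_mem : ∀ k hk, a k hk ∈ S := fun k hk => (e ⟨k, hk⟩).2
  have ha_mono : ∀ k1 k2 (h1 : k1 < L) (h2 : k2 < L), k1 < k2 → a k1 h1 < a k2 h2 := by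
    intro k1 k2 h1 h2 h
    exact_mod_cast e.strictMono (show (⟨k1,h1⟩ : Fin L) < ⟨k2,h2⟩ from h)
  -- key gap estimate
  have hgap : ∀ k2 (h2 : k2 < L) k1 (h1 : k1 ≤ k2), a k1 (lt_of_le_of_lt h1 h2) + (k2 - k1 : ℤ) ≤ a k2 h2 := by
    intro k2
    induction k2 with
    | zero => intro h2 k1 h1; interval_cases k1; simp
    | succ m ihm =>
      intro h2 k1 h1
      rcases Nat.lt_or_ge k1 (m+1) with h | h
      · have hk1m : k1 ≤ m := by omega
        have := ihm (by omega) k1 hk1m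
        have hlt := ha_mono m (m+1) (by omega) h2 (by omega)
        push_cast
        push_cast at this
        omega
      · have : k1 = m+1 := by omega
        subst this; simp
  have hbase : ∀ k (hk : k < L), base + (k:ℤ) ≤ a k hk := by
    intro k hk
    have h0 : base ≤ a 0 (by omega) := hS _ (ha_mem 0 (by omega))
    have := hgap k hk 0 (by omega)
    push_cast at this
    omega
  refine ⟨fun j => if h : j < L then (a (L-1-j) (by omega) - (base + ((L-1-j : ℕ) : ℤ))).toNat else 0,
    ?_, ?_⟩
  · intro j j' hjj
    by_cases hj' : j' < L
    · have hj : j < L := by omega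
      simp only [dif_pos hj, dif_pos hj']
      apply Int.toNat_le_toNat
      have h1 : L-1-j' ≤ L-1-j := by omega
      have := hgap (L-1-j) (by omega) (L-1-j') h1
      push_cast at this ⊢
      omega
    · simp only [dif_neg hj']
      omega
  · ext z
    simp only [symbolRow, Finset.mem_image, Finset.mem_range]
    constructor
    · rintro ⟨k, hk, rfl⟩
      have hk' : L - 1 - k < L := by omega
      have hkk : L - 1 - (L - 1 - k) = k := by omega
      simp only [dif_pos hk']
      have hb := hbase k hk
      have : base + (k:ℤ) + ((a (L-1-(L-1-k)) (by omega) - (base + ((L-1-(L-1-k) : ℕ) : ℤ))).toNat : ℤ) = a k hk := by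
        rw [Int.toNat_of_nonneg (by simp only [hkk]; omega)]
        simp only [hkk]; ring
      rw [this]; exact ha_mem k hk
    · intro hz
      obtain ⟨k, hke⟩ := e.surjective ⟨z, hz⟩
      refine ⟨k.1, k.2, ?_⟩
      have hzv : a k.1 k.2 = z := by
        show ((e ⟨k.1, k.2⟩ : S) : ℤ) = z
        rw [Fin.eta, hke]
      have hk' : L - 1 - k.1 < L := by omega
      have hkk : L - 1 - (L - 1 - k.1) = k.1 := by omega
      simp only [dif_pos hk']
      have hb := hbase k.1 k.2
      rw [Int.toNat_of_nonneg (by simp only [hkk]; omega)]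
      simp only [hkk]
      omega

lemma base_mem_symbolRow (p : ℕ → ℕ) (base : ℤ) (L : ℕ) (hL : 0 < L) (h0 : p (L-1) = 0) :
    base ∈ symbolRow p base L := by
  simp only [symbolRow, Finset.mem_image, Finset.mem_range]
  exact ⟨0, hL, by simp [h0]⟩

/-- for `s₁ ≤ s₂` and the symbol rows `L₁, L₂` of a bipartition, the matched
set `Ỹ = matchSet L₁ L₂` consists of `|L₁|` pairwise distinct elements of `L₂`, the union
`(L₂ ∖ Ỹ) ∪ L₁` has no repeated element, both new rows have smallest entry `s₂ − d`, and
they form a valid symbol of some bipartition with charge `(s₁,s₂)`. -/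
theorem stmt10 (s₁ s₂ : ℤ) (hs : s₁ ≤ s₂)
    (p q : ℕ → ℕ) (hp : Antitone p) (hq : Antitone q)
    (t : ℕ) (ht : (t : ℤ) = s₂ - s₁)
    (d : ℕ) (hd : t ≤ d) (hpd : p (d - t) = 0) (hqd : q (d - t) = 0) :
    matchSet (symbolRow p (s₂ - d) (d + 1 - t)) (symbolRow q (s₂ - d) (d + 1)) ⊆
        symbolRow q (s₂ - d) (d + 1) ∧
    (matchSet (symbolRow p (s₂ - d) (d + 1 - t)) (symbolRow q (s₂ - d) (d + 1))).card =
        (symbolRow p (s₂ - d) (d + 1 - t)).card ∧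
    Disjoint
      (symbolRow q (s₂ - d) (d + 1) \
        matchSet (symbolRow p (s₂ - d) (d + 1 - t)) (symbolRow q (s₂ - d) (d + 1)))
      (symbolRow p (s₂ - d) (d + 1 - t)) ∧
    (s₂ - d) ∈ matchSet (symbolRow p (s₂ - d) (d + 1 - t)) (symbolRow q (s₂ - d) (d + 1)) ∧
    (∀ z ∈ matchSet (symbolRow p (s₂ - d) (d + 1 - t)) (symbolRow q (s₂ - d) (d + 1)),
      s₂ - d ≤ z) ∧
    (s₂ - d) ∈ ((symbolRow q (s₂ - d) (d + 1) \
        matchSet (symbolRow p (s₂ - d) (d + 1 - t)) (symbolRow q (s₂ - d) (d + 1))) ∪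
      symbolRow p (s₂ - d) (d + 1 - t)) ∧
    (∀ z ∈ ((symbolRow q (s₂ - d) (d + 1) \
        matchSet (symbolRow p (s₂ - d) (d + 1 - t)) (symbolRow q (s₂ - d) (d + 1))) ∪
      symbolRow p (s₂ - d) (d + 1 - t)), s₂ - d ≤ z) ∧
    (∃ p' q' : ℕ → ℕ, Antitone p' ∧ Antitone q' ∧
      symbolRow p' (s₂ - d) (d + 1 - t) =
        matchSet (symbolRow p (s₂ - d) (d + 1 - t)) (symbolRow q (s₂ - d) (d + 1)) ∧
      symbolRow q' (s₂ - d) (d + 1) =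
        ((symbolRow q (s₂ - d) (d + 1)) \
            matchSet (symbolRow p (s₂ - d) (d + 1 - t)) (symbolRow q (s₂ - d) (d + 1))) ∪
          symbolRow p (s₂ - d) (d + 1 - t)) := by
  set base := s₂ - (d:ℤ) with hbase
  set X := symbolRow p base (d + 1 - t) with hXdef
  set Y := symbolRow q base (d + 1) with hYdef
  have hcX : X.card = d + 1 - t := symbolRow_card p hp base _
  have hcY : Y.card = d + 1 := symbolRow_card q hq base _
  have hle : X.card ≤ Y.card := by omega
  obtain ⟨hsub, hcard, hinter⟩ := matchSet_main X.card X Y rfl hle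
  set M := matchSet X Y with hMdef
  have hbX : base ∈ X := by
    apply base_mem_symbolRow
    · omega
    · have : d + 1 - t - 1 = d - t := by omega
      rw [this, hpd]
  have hbY : base ∈ Y := by
    apply base_mem_symbolRow
    · omega
    · have h1 : d + 1 - 1 = d := by omega
      rw [h1]
      have := hq (show d - t ≤ d by omega)
      omega
  have hXge := symbolRow_mem_ge p base (d + 1 - t)
  have hYge := symbolRow_mem_ge q base (d + 1)
  have hdisj : Disjoint (Y \ M) X := by
    rw [Finset.disjoint_left]
    intro z hz hzX
    obtain ⟨hzY, hzM⟩ := Finset.mem_sdiff.mp hz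
    exact hzM (hinter (Finset.mem_inter.mpr ⟨hzX, hzY⟩))
  have hbM : base ∈ M := hinter (Finset.mem_inter.mpr ⟨hbX, hbY⟩)
  have hMsub : M ⊆ Y := hsub
  refine ⟨hsub, hcard, hdisj, hbM, fun z hz => hYge z (hMsub hz),
    Finset.mem_union_right _ hbX, ?_, ?_⟩
  · intro z hz
    rcases Finset.mem_union.mp hz with h | h
    · exact hYge z (Finset.mem_sdiff.mp h).1
    · exact hXge z h
  · have hMge : ∀ z ∈ M, base ≤ z := fun z hz => hYge z (hMsub hz)
    obtain ⟨p', hp', hp'row⟩ := exists_antitone_row base M hMge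
    have hcM : M.card = d + 1 - t := by rw [hcard, hcX]
    have hUge : ∀ z ∈ (Y \ M) ∪ X, base ≤ z := by
      intro z hz
      rcases Finset.mem_union.mp hz with h | h
      · exact hYge z (Finset.mem_sdiff.mp h).1
      · exact hXge z h
    obtain ⟨q', hq', hq'row⟩ := exists_antitone_row base ((Y \ M) ∪ X) hUge
    have hcU : ((Y \ M) ∪ X).card = d + 1 := by
      rw [Finset.card_union_of_disjoint hdisj, Finset.card_sdiff_of_subset hMsub]
      omega
    exact ⟨p', q', hp', hq', by rw [← hcM, hp'row], by rw [← hcU, hq'row]⟩
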